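/- Assume V is finite-dimensional and that there exists x ∈ G with x ∉ N such that the conjugate representation π^x is isomorphic to π (i.e., there is an invertible linear map T : V → V with T ∘ π(x⁻¹gx) = π(g) ∘ T for all g ∈ N). Then the induced representation Ind_N^G π is reducible (not irreducible). -/

import Mathlib

/-- The induced representation `Ind_H^G ρ` realized concretely: for a subgroup `H ≤ G`
of finite index, the space of formal sums `Σ_{x ∈ G/H} x·w_x` with `w_x ∈ W` is
identified with the space of functions `f : G → W` satisfying `f(gh) = ρ(h⁻¹) f(g)`
(the value `f(x)` being the coefficient `w_x`). -/
def IndSubmodule {G : Type*} [Group G] (H : Subgroup G) {W : Type*}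
    [AddCommGroup W] [Module ℂ W] (ρ : Representation ℂ ↥H W) :
    Submodule ℂ (G → W) where
  carrier := {f | ∀ (g : G) (h : ↥H), f (g * ↑h) = ρ h⁻¹ (f g)}
  add_mem' := by
    intro a b ha hb g h
    simp only [Pi.add_apply, ha g h, hb g h, map_add]
  zero_mem' := by
    intro g h
    simp
  smul_mem' := by
    intro c f hf g h
    simp only [Pi.smul_apply, hf g h, map_smul]

/-- The action of `G` on `Ind_H^G ρ` by left translation. -/
def IndRep {G : Type*} [Group G] (H : Subgroup G) {W : Type*}
    [AddCommGroup W] [Module ℂ W] (ρ : Representation ℂ ↥H W) :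
    Representation ℂ G ↥(IndSubmodule H ρ) where
  toFun x :=
    { toFun := fun f => ⟨fun g => (f : G → W) (x⁻¹ * g), by
        intro g h
        show (f : G → W) (x⁻¹ * (g * ↑h)) = ρ h⁻¹ ((f : G → W) (x⁻¹ * g))
        rw [← mul_assoc]
        exact f.2 (x⁻¹ * g) h⟩
      map_add' := by intro a b; ext g; rfl
      map_smul' := by intro c a; ext g; rfl }
  map_one' := by
    ext f g
    simp
  map_mul' := by
    intro a b
    ext f g
    simp [mul_assoc]

/-- Let `N` be a normal subgroup of finite index in `G` and `(π, V)`
an irreducible representation of `N` on a nonzero finite-dimensional complex vector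
space. If there exists `x ∈ G` with `x ∉ N` such that the conjugate representation
`π^x` is isomorphic to `π`, then the induced representation `Ind_N^G π` is reducible
(not irreducible). -/
theorem induced_reducible_of_iso {G : Type*} [Group G] (N : Subgroup G)
    (hN : N.Normal) [N.FiniteIndex]
    {V : Type*} [AddCommGroup V] [Module ℂ V] [Nontrivial V] [FiniteDimensional ℂ V]
    (π : Representation ℂ ↥N V)
    (hirr : ∀ U : Submodule ℂ V, (∀ (g : ↥N) (v : V), v ∈ U → π g v ∈ U) →
      U = ⊥ ∨ U = ⊤)
    (hiso : ∃ x : G, x ∉ N ∧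
      ∃ T : V ≃ₗ[ℂ] V, ∀ g g' : ↥N, (↑g' : G) = x⁻¹ * ↑g * x →
        (T : V →ₗ[ℂ] V) ∘ₗ (π g' : V →ₗ[ℂ] V) =
          (π g : V →ₗ[ℂ] V) ∘ₗ (T : V →ₗ[ℂ] V)) :
    ¬ (∀ U : Submodule ℂ ↥(IndSubmodule N π),
        (∀ (x : G) (w : ↥(IndSubmodule N π)), w ∈ U → IndRep N π x w ∈ U) →
        U = ⊥ ∨ U = ⊤) := by
  classical
  obtain ⟨x, hx, T, hT⟩ := hiso
  -- The induced space is finite dimensional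
  haveI : FiniteDimensional ℂ ↥(IndSubmodule N π) := by
    let Φ : ↥(IndSubmodule N π) →ₗ[ℂ] ((G ⧸ N) → V) :=
      { toFun := fun f q => (f : G → V) (Quotient.out q)
        map_add' := fun a b => rfl
        map_smul' := fun c a => rfl }
    have hΦ : Function.Injective Φ := by
      intro a b hab
      ext g
      have hmem : (Quotient.out (QuotientGroup.mk g : G ⧸ N))⁻¹ * g ∈ N := by
        rw [← QuotientGroup.eq]
        exact (QuotientGroup.out_eq' _)
      set h : ↥N := ⟨_, hmem⟩
      have hg : g = Quotient.out (QuotientGroup.mk g : G ⧸ N) * ↑h := by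
        simp [h]
      have ha := a.2 (Quotient.out (QuotientGroup.mk g : G ⧸ N)) h
      have hb := b.2 (Quotient.out (QuotientGroup.mk g : G ⧸ N)) h
      have : Φ a (QuotientGroup.mk g) = Φ b (QuotientGroup.mk g) := by rw [hab]
      show (a : G → V) g = (b : G → V) g
      rw [hg, ha, hb]
      exact congrArg (⇑(π h⁻¹)) this
    exact FiniteDimensional.of_injective Φ hΦ
  -- the intertwining operator S
  have conj_mem : ∀ h : ↥N, x⁻¹ * ↑h * x ∈ N := by
    intro h
    have := hN.conj_mem ↑h h.2 x⁻¹
    simpa using this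
  let S : Module.End ℂ ↥(IndSubmodule N π) :=
    { toFun := fun f => ⟨fun g => T ((f : G → V) (g * x)), by
        intro g h
        set h' : ↥N := ⟨x⁻¹ * ↑h * x, conj_mem h⟩
        have key : (T : V →ₗ[ℂ] V) ∘ₗ (π h'⁻¹ : V →ₗ[ℂ] V) =
            (π h⁻¹ : V →ₗ[ℂ] V) ∘ₗ (T : V →ₗ[ℂ] V) := by
          apply hT h⁻¹ h'⁻¹
          show (↑h' : G)⁻¹ = x⁻¹ * (↑h)⁻¹ * x
          show (x⁻¹ * ↑h * x)⁻¹ = x⁻¹ * (↑h)⁻¹ * x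
          group
        have harg : g * ↑h * x = (g * x) * ↑h' := by
          show g * ↑h * x = (g * x) * (x⁻¹ * ↑h * x)
          group
        show T ((f : G → V) (g * ↑h * x)) = π h⁻¹ (T ((f : G → V) (g * x)))
        rw [harg, f.2 (g * x) h']
        exact LinearMap.congr_fun key ((f : G → V) (g * x))⟩
      map_add' := by intro a b; ext g; simp
      map_smul' := by intro c a; ext g; simp }
  -- S commutes with the G-action
  have hcomm : ∀ (a : G) (f : ↥(IndSubmodule N π)),
      S (IndRep N π a f) = IndRep N π a (S f) := by
    intro a f
    ext g
    show T ((f : G → V) (a⁻¹ * (g * x))) = T ((f : G → V) (a⁻¹ * g * x))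
    rw [mul_assoc]
  -- a nonzero element supported on N
  obtain ⟨v, hv⟩ := exists_ne (0 : V)
  let f0fun : G → V := fun g => if h : g ∈ N then π (⟨g, h⟩ : ↥N)⁻¹ v else 0
  have f0mem : f0fun ∈ IndSubmodule N π := by
    intro g h
    by_cases hg : g ∈ N
    · have hgh : g * ↑h ∈ N := N.mul_mem hg h.2
      simp only [f0fun, dif_pos hg, dif_pos hgh]
      have : (⟨g * ↑h, hgh⟩ : ↥N) = ⟨g, hg⟩ * h := rfl
      rw [this, mul_inv_rev, map_mul]
      rfl
    · have hgh : g * ↑h ∉ N := by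
        intro hc
        exact hg (by simpa using N.mul_mem hc (N.inv_mem h.2))
      simp only [f0fun, dif_neg hg, dif_neg hgh, map_zero]
  let f0 : ↥(IndSubmodule N π) := ⟨f0fun, f0mem⟩
  have f0_one : f0fun 1 = v := by
    simp only [f0fun, dif_pos N.one_mem]
    have : (⟨(1 : G), N.one_mem⟩ : ↥N) = 1 := rfl
    rw [this, inv_one, map_one]
    rfl
  haveI : Nontrivial ↥(IndSubmodule N π) := by
    refine ⟨f0, 0, fun hc => hv ?_⟩
    have : f0fun 1 = 0 := congrFun (congrArg Subtype.val hc) 1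
    rwa [f0_one] at this
  -- eigenvalue
  obtain ⟨μ, hμ⟩ := Module.End.exists_eigenvalue S
  intro hcontra
  have hinv : ∀ (a : G) (w : ↥(IndSubmodule N π)), w ∈ Module.End.eigenspace S μ →
      IndRep N π a w ∈ Module.End.eigenspace S μ := by
    intro a w hw
    rw [Module.End.mem_eigenspace_iff] at hw ⊢
    rw [hcomm, hw, map_smul]
  rcases hcontra _ hinv with hbot | htop
  · exact hμ hbot
  · -- f0 is in the eigenspace, derive a contradiction
    have hf0 : S f0 = μ • f0 := by
      rw [← Module.End.mem_eigenspace_iff, htop]; trivial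
    have hval : ∀ g : G, T (f0fun (g * x)) = μ • f0fun g := by
      intro g
      exact congrArg (fun w : ↥(IndSubmodule N π) => (w : G → V) g) hf0
    have h1 : T (f0fun (1 * x)) = μ • f0fun 1 := hval 1
    have hx0 : f0fun x = 0 := by simp only [f0fun]; rw [dif_neg hx]
    rw [one_mul, hx0, map_zero, f0_one] at h1
    have hμ0 : μ = 0 := by
      rcases smul_eq_zero.mp h1.symm with h | h
      · exact h
      · exact absurd h hv
    have h2 : T (f0fun (x⁻¹ * x)) = μ • f0fun x⁻¹ := hval x⁻¹
    rw [inv_mul_cancel x, f0_one, hμ0, zero_smul] at h2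
    exact hv (by simpa using congrArg T.symm h2)
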